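/- With the notation of the transverse-foliation/linking-number setup: let q ≥ 1 and let z be a positively recurrent point of F such that the linking number i(F̃; ã, b̃, z) exists for distinct fixed points ã, b̃ of F̃. Then z is positively recurrent for F^q, the linking number i(F̃^q; ã, b̃, z) exists, and i(F̃^q; ã, b̃, z) = q · i(F̃; ã, b̃, z). -/

import Mathlib

open Filter

/-- In a chain with strictly increasing consecutive steps, gaps are at least the index gap. -/
lemma linking_gap_lemma {s : ℕ → ℕ} {k : ℕ} (h : ∀ i, i < k → s i < s (i + 1)) :
    ∀ j, j ≤ k → ∀ i, i ≤ j → s i + (j - i) ≤ s j := by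
  intro j
  induction j with
  | zero =>
    intro _ i hi
    have : i = 0 := Nat.le_zero.mp hi
    subst this; simp
  | succ j ih =>
    intro hj i hi
    rcases Nat.lt_or_ge i (j + 1) with h1 | h1
    · have hi' : i ≤ j := by omega
      have h2 := ih (by omega) i hi'
      have h3 := h j (by omega)
      omega
    · have : i = j + 1 := by omega
      subst this; simp

/-- Chains of `ε`-return times: all pairwise gaps are `ε`-return times. -/
lemma linking_chain_lemma {X : Type*} [MetricSpace X] (F : X → X) (hF : Continuous F) (z : X)
    (hret : ∀ ε : ℝ, 0 < ε → ∃ t : ℕ, 1 ≤ t ∧ dist (F^[t] z) z < ε) :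
    ∀ (k : ℕ) (ε : ℝ), 0 < ε → ∃ s : ℕ → ℕ, s 0 = 0 ∧ (∀ i, i < k → s i < s (i + 1)) ∧
      ∀ i j, i ≤ j → j ≤ k → dist (F^[s j - s i] z) z < ε := by
  intro k
  induction k with
  | zero =>
    intro ε hε
    refine ⟨fun _ => 0, rfl, by omega, ?_⟩
    intro i j hij hj
    have hj0 : j = 0 := Nat.le_zero.mp hj
    have hi0 : i = 0 := Nat.le_zero.mp (hj0 ▸ hij)
    subst hj0; subst hi0
    simpa using hε
  | succ k ih =>
    intro ε hε
    obtain ⟨s, hs0, hmono, hdist⟩ := ih (ε / 2) (by positivity)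
    have hcont : ∀ i : ℕ, ∃ δ : ℝ, 0 < δ ∧ ∀ w, dist w z < δ →
        dist (F^[s k - s i] w) (F^[s k - s i] z) < ε / 2 := by
      intro i
      have hc : ContinuousAt (F^[s k - s i]) z := (hF.iterate (s k - s i)).continuousAt
      rcases Metric.continuousAt_iff.mp hc (ε / 2) (by positivity) with ⟨δ, hδ, h⟩
      exact ⟨δ, hδ, fun w hw => h hw⟩
    choose δf hδf hδ using hcont
    have hne : (Finset.range (k + 1)).Nonempty := ⟨0, by simp⟩
    set Δ : ℝ := min ε ((Finset.range (k + 1)).inf' hne δf) with hΔdef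
    have hΔpos : 0 < Δ := by
      refine lt_min hε ?_
      rw [Finset.lt_inf'_iff]
      intro i _
      exact hδf i
    obtain ⟨t, ht1, htd⟩ := hret Δ hΔpos
    refine ⟨fun i => if i ≤ k then s i else s k + t, by simp [hs0], ?_, ?_⟩
    · intro i hi
      by_cases h : i + 1 ≤ k
      · simp only [if_pos (by omega : i ≤ k), if_pos h]
        exact hmono i (by omega)
      · have hik : i ≤ k := by omega
        simp only [if_pos hik, if_neg h]
        have : i = k := by omega
        subst this
        omega
    · intro i j hij hjk
      by_cases hj : j ≤ k
      · simp only [if_pos (le_trans hij hj), if_pos hj]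
        exact (hdist i j hij hj).trans_le (by linarith)
      · have hjk1 : j = k + 1 := by omega
        by_cases hi : i ≤ k
        · simp only [if_pos hi, if_neg (by omega : ¬ j ≤ k)]
          have hsik : s i + (k - i) ≤ s k := linking_gap_lemma hmono k le_rfl i hi
          have heq : s k + t - s i = (s k - s i) + t := by omega
          rw [heq, Function.iterate_add_apply]
          have hd1 : dist (F^[s k - s i] (F^[t] z)) (F^[s k - s i] z) < ε / 2 := by
            apply hδ i
            calc dist (F^[t] z) z < Δ := htd
              _ ≤ (Finset.range (k + 1)).inf' hne δf := min_le_right _ _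
              _ ≤ δf i := Finset.inf'_le δf (Finset.mem_range.mpr (by omega))
          have hd2 : dist (F^[s k - s i] z) z < ε / 2 := hdist i k hi le_rfl
          calc dist (F^[s k - s i] (F^[t] z)) z
              ≤ dist (F^[s k - s i] (F^[t] z)) (F^[s k - s i] z)
                + dist (F^[s k - s i] z) z := dist_triangle _ _ _
            _ < ε / 2 + ε / 2 := by linarith
            _ = ε := by ring
        · have : i = j := by omega
          subst this
          simp only [if_neg hi]
          simpa using hε

/-- Arbitrarily late `ε`-return times divisible by `q`. -/
lemma linking_div_return {X : Type*} [MetricSpace X] (F : X → X) (hF : Continuous F) (z : X)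
    (q : ℕ) (hq : 0 < q)
    (hret : ∀ ε : ℝ, 0 < ε → ∃ t : ℕ, 1 ≤ t ∧ dist (F^[t] z) z < ε) :
    ∀ ε : ℝ, 0 < ε → ∀ M : ℕ, ∃ N, M < N ∧ q ∣ N ∧ dist (F^[N] z) z < ε := by
  intro ε hε M
  set L := q * (M + 1) with hL
  obtain ⟨s, hs0, hmono, hdist⟩ := linking_chain_lemma F hF z hret L ε hε
  have hmaps : ∀ a ∈ Finset.range (L + 1), s a % q ∈ Finset.range q :=
    fun a _ => Finset.mem_range.mpr (Nat.mod_lt _ hq)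
  have hcard : (Finset.range q).card * (M + 1) < (Finset.range (L + 1)).card := by
    simp only [Finset.card_range]
    omega
  obtain ⟨y, _, hylt⟩ :=
    Finset.exists_lt_card_fiber_of_mul_lt_card_of_maps_to hmaps hcard
  set T := (Finset.range (L + 1)).filter (fun x => s x % q = y) with hT
  have hTne : T.Nonempty := Finset.card_pos.mp (by omega)
  set i := T.min' hTne with hi
  set j := T.max' hTne with hj
  have hiT : i ∈ T := T.min'_mem hTne
  have hjT : j ∈ T := T.max'_mem hTne
  have hij_le : i ≤ j := T.min'_le j hjT
  have hsub : T ⊆ Finset.Icc i j := fun x hx =>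
    Finset.mem_Icc.mpr ⟨T.min'_le x hx, T.le_max' x hx⟩
  have hcard2 : T.card ≤ j + 1 - i := by
    have := Finset.card_le_card hsub
    simpa [Nat.card_Icc] using this
  have hgap : M + 1 ≤ j - i := by omega
  have hjL : j ≤ L := by
    have := (Finset.mem_filter.mp hjT).1
    have := Finset.mem_range.mp this
    omega
  have hge : s i + (j - i) ≤ s j := linking_gap_lemma hmono j hjL i hij_le
  have h1 : s i % q = y := (Finset.mem_filter.mp hiT).2
  have h2 : s j % q = y := (Finset.mem_filter.mp hjT).2
  refine ⟨s j - s i, by omega, ?_, hdist i j hij_le hjL⟩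
  exact (Nat.modEq_iff_dvd' (by omega)).mp (h1.trans h2.symm)

/-- Power formula for the linking number of a positively recurrent point: if `z` is
positively recurrent for `F` and the linking number `i(F̃; ã, b̃, z)` exists and equals
`v` — expressed here via the cumulative intersection number `S m` of the trajectory of
`z` over `m` steps of the isotopy with a path `γ̃` joining the fixed points `ã, b̃`, so
that `S(n_k)/n_k → v` along every returning subsequence — then `z` is positively
recurrent for `F^q`, the linking number `i(F̃^q; ã, b̃, z)` exists, and it equals
`q · v`  (the trajectory of `z` under the isotopy `I^q` over `m` steps is the trajectory
under `I` over `q·m` steps, so the corresponding normalized sums are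
`S(q·m_k)/m_k → q·v`). -/
theorem linking_number_power
    {X : Type*} [MetricSpace X] (F : X → X) (hF : Continuous F) (z : X)
    (hrec : ∃ n : ℕ → ℕ, StrictMono n ∧ (∀ k, 0 < n k) ∧
      Tendsto (fun k => F^[n k] z) atTop (nhds z))
    (S : ℕ → ℤ) (q : ℕ) (hq : 0 < q) (v : ℝ)
    (hv : ∀ n : ℕ → ℕ, StrictMono n → Tendsto (fun k => F^[n k] z) atTop (nhds z) →
      Tendsto (fun k => (S (n k) : ℝ) / (n k : ℝ)) atTop (nhds v)) :
    (∃ m : ℕ → ℕ, StrictMono m ∧ (∀ k, 0 < m k) ∧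
      Tendsto (fun k => (F^[q])^[m k] z) atTop (nhds z)) ∧
    (∀ m : ℕ → ℕ, StrictMono m → Tendsto (fun k => (F^[q])^[m k] z) atTop (nhds z) →
      Tendsto (fun k => (S (q * m k) : ℝ) / (m k : ℝ)) atTop (nhds ((q : ℝ) * v))) := by
  obtain ⟨n, hnmono, hnpos, hntend⟩ := hrec
  have hret : ∀ ε : ℝ, 0 < ε → ∃ t : ℕ, 1 ≤ t ∧ dist (F^[t] z) z < ε := by
    intro ε hε
    obtain ⟨K, hK⟩ := Metric.tendsto_atTop.mp hntend ε hε
    exact ⟨n K, hnpos K, hK K le_rfl⟩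
  constructor
  · -- recurrence for F^[q]
    have key : ∀ (k M : ℕ), ∃ N, M < N ∧ q ∣ N ∧ dist (F^[N] z) z < 1 / (k + 1) :=
      fun k M => linking_div_return F hF z q hq hret (1 / (k + 1)) (by positivity) M
    choose Nf h1 h2 h3 using key
    set g : ℕ → ℕ := fun k => Nat.rec (Nf 0 0) (fun k ih => Nf (k + 1) ih) k with hg
    have hgs : ∀ k, g (k + 1) = Nf (k + 1) (g k) := fun k => rfl
    have hglt : ∀ k, g k < g (k + 1) := fun k => h1 (k + 1) (g k)
    have hgmono : StrictMono g := strictMono_nat_of_lt_succ hglt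
    have hgdvd : ∀ k, q ∣ g k := by
      intro k
      cases k with
      | zero => exact h2 0 0
      | succ k => exact h2 (k + 1) (g k)
    have hgdist : ∀ k : ℕ, dist (F^[g k] z) z < 1 / (k + 1) := by
      intro k
      cases k with
      | zero => exact h3 0 0
      | succ k => exact h3 (k + 1) (g k)
    have hgpos : ∀ k, 0 < g k := by
      intro k
      have h0 : 0 < g 0 := h1 0 0
      exact lt_of_lt_of_le h0 (hgmono.monotone (Nat.zero_le k))
    refine ⟨fun k => g k / q, ?_, ?_, ?_⟩
    · apply strictMono_nat_of_lt_succ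
      intro k
      have e1 : q * (g k / q) = g k := Nat.mul_div_cancel' (hgdvd k)
      have e2 : q * (g (k + 1) / q) = g (k + 1) := Nat.mul_div_cancel' (hgdvd (k + 1))
      have : q * (g k / q) < q * (g (k + 1) / q) := by rw [e1, e2]; exact hglt k
      exact Nat.lt_of_mul_lt_mul_left this
    · intro k
      have e1 : q * (g k / q) = g k := Nat.mul_div_cancel' (hgdvd k)
      rcases Nat.eq_zero_or_pos (g k / q) with h | h
      · exfalso
        rw [h, mul_zero] at e1
        exact absurd e1.symm (Nat.pos_iff_ne_zero.mp (hgpos k))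
      · exact h
    · have heq : ∀ k : ℕ, (F^[q])^[g k / q] z = F^[g k] z := by
        intro k
        rw [← Function.iterate_mul, Nat.mul_div_cancel' (hgdvd k)]
      rw [tendsto_iff_dist_tendsto_zero]
      apply squeeze_zero (fun k => dist_nonneg)
        (g := fun k : ℕ => 1 / ((k : ℝ) + 1))
      · intro k
        rw [heq k]
        exact le_of_lt (hgdist k)
      · exact tendsto_one_div_add_atTop_nhds_zero_nat
  · -- the limit formula
    intro m hmmono hmtend
    have h1 : StrictMono (fun k => q * m k) := fun a b h =>
      (mul_lt_mul_iff_right₀ hq).mpr (hmmono h)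
    have h2 : Tendsto (fun k => F^[q * m k] z) atTop (nhds z) := by
      simpa [Function.iterate_mul] using hmtend
    have h3 := hv _ h1 h2
    have h4 := h3.const_mul (q : ℝ)
    apply Tendsto.congr' _ h4
    filter_upwards [Filter.eventually_ge_atTop 1] with k hk
    have hmk : 0 < m k := lt_of_lt_of_le hk hmmono.le_apply
    have hq' : (q : ℝ) ≠ 0 := Nat.cast_ne_zero.mpr (Nat.pos_iff_ne_zero.mp hq)
    have hm' : (m k : ℝ) ≠ 0 := Nat.cast_ne_zero.mpr (Nat.pos_iff_ne_zero.mp hmk)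
    show (q : ℝ) * ((S (q * m k) : ℝ) / ((q * m k : ℕ) : ℝ)) = (S (q * m k) : ℝ) / (m k : ℝ)
    push_cast
    field_simp
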